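/- arXiv:1510.01077 — 7 statements merged into one kernel-verified Lean document; each statement's English description precedes it below -/
import Mathlib

section
/- Suppose u₁ ∈ H satisfies ‖u₁‖ = 1 and J(u₁) ≤ J(v) for every v ∈ H with ‖v‖ = 1 (u₁ is a ground state, i.e. a minimizer of the Rayleigh quotient J(u)/‖u‖ over nonzero u). Then J(u₁) • u₁ ∈ ∂J(u₁), i.e. u₁ solves the nonlinear eigenvalue problem λ u ∈ ∂J(u) with eigenvalue λ = J(u₁). -/
/-- `p` is a subgradient of `J` at `u`: `J v ≥ J u + ⟨p, v - u⟩` for all `v`. -/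
def IsSubgradientAt {H : Type*} [NormedAddCommGroup H] [InnerProductSpace ℝ H]
    (J : H → ℝ) (u p : H) : Prop :=
  ∀ v : H, J v ≥ J u + (inner ℝ p (v - u) : ℝ)

/-- A ground state, i.e. a minimizer of `J` over the unit sphere (equivalently of the
Rayleigh quotient `J(u)/‖u‖` over nonzero `u`), solves the nonlinear eigenvalue problem
`λ u ∈ ∂J(u)` with eigenvalue `λ = J(u₁)`. -/
theorem groundState_isEigenfunction
    {H : Type*} [NormedAddCommGroup H] [InnerProductSpace ℝ H] [CompleteSpace H]
    (J : H → ℝ) (hconv : ConvexOn ℝ Set.univ J)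
    (hhom : ∀ (c : ℝ) (w : H), J (c • w) = |c| * J w)
    (u₁ : H) (hnorm : ‖u₁‖ = 1) (hmin : ∀ v : H, ‖v‖ = 1 → J u₁ ≤ J v) :
    IsSubgradientAt J u₁ ((J u₁) • u₁) := by
  have hJ0 : J 0 = 0 := by
    have := hhom 0 0
    simpa using this
  have hJpos : 0 ≤ J u₁ := by
    have hneg : J (-u₁) = J u₁ := by
      have := hhom (-1) u₁
      simpa using this
    have hmid : J 0 ≤ (1/2 : ℝ) * J u₁ + (1/2 : ℝ) * J (-u₁) := by
      have := hconv.2 (Set.mem_univ u₁) (Set.mem_univ (-u₁))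
        (by norm_num : (0:ℝ) ≤ 1/2) (by norm_num : (0:ℝ) ≤ 1/2) (by norm_num)
      simpa using this
    rw [hJ0, hneg] at hmid
    linarith
  intro v
  have hinner : (inner ℝ ((J u₁) • u₁) (v - u₁) : ℝ)
      = J u₁ * (inner ℝ u₁ v : ℝ) - J u₁ := by
    rw [real_inner_smul_left, inner_sub_right, real_inner_self_eq_norm_sq, hnorm]
    ring
  rw [hinner]
  have key : J u₁ * (inner ℝ u₁ v : ℝ) ≤ J v := by
    rcases eq_or_ne v 0 with rfl | hv
    · simp [hJ0]
    · have hvn : ‖v‖ ≠ 0 := norm_ne_zero_iff.mpr hv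
      have h1 : J u₁ ≤ J (‖v‖⁻¹ • v) := by
        apply hmin
        rw [norm_smul, norm_inv, norm_norm, inv_mul_cancel₀ hvn]
      have h2 : J (‖v‖⁻¹ • v) = ‖v‖⁻¹ * J v := by
        rw [hhom, abs_of_nonneg (by positivity)]
      have h3 : ‖v‖ * J u₁ ≤ J v := by
        rw [h2] at h1
        have := mul_le_mul_of_nonneg_left h1 (norm_nonneg v)
        rwa [mul_inv_cancel_left₀ hvn] at this
      have h4 : (inner ℝ u₁ v : ℝ) ≤ ‖v‖ := by
        calc (inner ℝ u₁ v : ℝ) ≤ ‖u₁‖ * ‖v‖ := real_inner_le_norm u₁ v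
        _ = ‖v‖ := by rw [hnorm, one_mul]
      calc J u₁ * (inner ℝ u₁ v : ℝ) ≤ J u₁ * ‖v‖ := by
            exact mul_le_mul_of_nonneg_left h4 hJpos
        _ = ‖v‖ * J u₁ := mul_comm _ _
        _ ≤ J v := h3
  linarith
end

section
/- Let f ∈ H and λ > 0 with λ • f ∈ ∂J(f). Define u : [0,∞) → H by u(t) = (1 - tλ) • f for 0 ≤ t ≤ 1/λ and u(t) = 0 for t > 1/λ. Then u(0) = f; for every t ∈ (0, 1/λ), u is differentiable at t with u'(t) = -λ • f and λ • f ∈ ∂J(u(t)); and for every t > 1/λ, u is differentiable at t with u'(t) = 0 and 0 ∈ ∂J(u(t)). Hence u solves the gradient (scale space) flow ∂ₜu(t) ∈ -∂J(u(t)), u(0) = f, for all t ≠ 1/λ. -/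
/-- If `f` is an eigenfunction, `λ • f ∈ ∂J(f)` with `λ > 0`, then
`u(t) = (1 - tλ) • f` for `t ≤ 1/λ` and `u(t) = 0` afterwards solves the gradient
(scale space) flow `∂ₜ u(t) ∈ -∂J(u(t))`, `u(0) = f`, away from `t = 1/λ`. -/
theorem gradientFlow_of_eigenfunction
    {H : Type*} [NormedAddCommGroup H] [InnerProductSpace ℝ H] [CompleteSpace H]
    (J : H → ℝ) (hconv : ConvexOn ℝ Set.univ J)
    (hhom : ∀ (c : ℝ) (w : H), J (c • w) = |c| * J w)
    (f : H) (lam : ℝ) (hlam : 0 < lam) (hef : IsSubgradientAt J f (lam • f))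
    (u : ℝ → H)
    (hu : ∀ t : ℝ, u t = if t ≤ 1 / lam then (1 - t * lam) • f else 0) :
    u 0 = f ∧
      (∀ t ∈ Set.Ioo (0 : ℝ) (1 / lam),
        HasDerivAt u (-(lam • f)) t ∧ IsSubgradientAt J (u t) (lam • f)) ∧
      (∀ t : ℝ, 1 / lam < t →
        HasDerivAt u (0 : H) t ∧ IsSubgradientAt J (u t) (0 : H)) := by
  have J0 : J 0 = 0 := by
    have := hhom 0 f
    simpa using this
  have Jnonneg : ∀ v : H, 0 ≤ J v := by
    intro v
    have h := hconv.2 (Set.mem_univ v) (Set.mem_univ (-v))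
      (by norm_num : (0:ℝ) ≤ (1/2 : ℝ)) (by norm_num : (0:ℝ) ≤ (1/2 : ℝ)) (by norm_num)
    have hmid : (1/2 : ℝ) • v + (1/2 : ℝ) • (-v) = 0 := by
      simp [smul_neg]
    rw [hmid, J0] at h
    have hJneg : J (-v) = J v := by
      have := hhom (-1) v
      simpa using this
    rw [hJneg] at h
    simp only [smul_eq_mul] at h
    linarith
  -- key inequality : J v ≥ ⟨λf, v⟩ for all v, and J f = ⟨λf, f⟩
  have h0 : (0:ℝ) ≥ J f + (inner ℝ (lam • f) ((0:H) - f) : ℝ) := by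
    have := hef 0
    rwa [J0] at this
  have h2 : J ((2:ℝ) • f) ≥ J f + (inner ℝ (lam • f) ((2:ℝ) • f - f) : ℝ) := hef ((2:ℝ) • f)
  have hJ2 : J ((2:ℝ) • f) = 2 * J f := by
    have := hhom 2 f
    simpa using this
  have hle : J f ≤ (inner ℝ (lam • f) f : ℝ) := by
    have : (inner ℝ (lam • f) ((0:H) - f) : ℝ) = -(inner ℝ (lam • f) f : ℝ) := by
      simp
    rw [this] at h0; linarith
  have hge : (inner ℝ (lam • f) f : ℝ) ≤ J f := by
    have : (inner ℝ (lam • f) ((2:ℝ) • f - f) : ℝ) = (inner ℝ (lam • f) f : ℝ) := by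
      rw [two_smul]; simp
    rw [this, hJ2] at h2; linarith
  have hJf : J f = (inner ℝ (lam • f) f : ℝ) := le_antisymm hle hge
  have key : ∀ v : H, (inner ℝ (lam • f) v : ℝ) ≤ J v := by
    intro v
    have := hef v
    rw [inner_sub_right] at this
    linarith [hJf ▸ this]
  constructor
  · rw [hu 0]
    rw [if_pos (by positivity)]
    simp
  constructor
  · intro t ht
    obtain ⟨ht0, ht1⟩ := ht
    have hut : u t = (1 - t * lam) • f := by
      rw [hu t, if_pos ht1.le]
    constructor
    · -- derivative
      have hev : u =ᶠ[nhds t] fun s => (1 - s * lam) • f := by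
        filter_upwards [eventually_lt_nhds ht1] with s hs
        rw [hu s, if_pos hs.le]
      have hd : HasDerivAt (fun s : ℝ => (1 - s * lam) • f) ((-lam) • f) t := by
        have hg : HasDerivAt (fun s : ℝ => 1 - s * lam) (-lam) t := by
          simpa using ((hasDerivAt_id t).mul_const lam).const_sub 1
        simpa using hg.smul_const f
      have : HasDerivAt u ((-lam) • f) t := hd.congr_of_eventuallyEq hev
      simpa [neg_smul] using this
    · -- subgradient
      intro v
      have hc0 : 0 ≤ 1 - t * lam := by
        have : t * lam ≤ (1/lam) * lam := by nlinarith
        rw [one_div, inv_mul_cancel₀ hlam.ne'] at this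
        linarith
      have hJu : J (u t) = (inner ℝ (lam • f) (u t) : ℝ) := by
        rw [hut, hhom, abs_of_nonneg hc0, real_inner_smul_right, ← hJf]
      rw [inner_sub_right, hJu]
      have := key v
      linarith
  · intro t ht
    have hut : u t = 0 := by
      rw [hu t, if_neg (not_le.mpr ht)]
    constructor
    · have hev : u =ᶠ[nhds t] fun _ => (0:H) := by
        filter_upwards [eventually_gt_nhds ht] with s hs
        rw [hu s, if_neg (not_le.mpr hs)]
      exact (hasDerivAt_const t (0:H)).congr_of_eventuallyEq hev
    · intro v
      rw [hut, J0]
      simpa using Jnonneg v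
end

section
/- Let f ∈ H and λ > 0 with λ • f ∈ ∂J(f), and let t > 0. Then u* = max(1 - tλ, 0) • f is the unique minimizer over u ∈ H of the variational functional E(u) = (1/2)‖u - f‖² + t · J(u). -/
lemma quad_identity {H : Type*} [NormedAddCommGroup H] [InnerProductSpace ℝ H]
    (u w f : H) :
    (1/2) * ‖w - f‖ ^ 2 - (1/2) * ‖u - f‖ ^ 2 + (inner ℝ (f - u) (w - u) : ℝ)
      = (1/2) * ‖w - u‖ ^ 2 := by
  simp only [norm_sub_sq_real, inner_sub_left, inner_sub_right,
    real_inner_self_eq_norm_sq]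
  rw [real_inner_comm f w, real_inner_comm f u, real_inner_comm u w]
  ring

/-- If `λ • f ∈ ∂J(f)` with `λ > 0` and `t > 0`, then `u* = max(1 - tλ, 0) • f` is the
unique minimizer of the variational functional `E(u) = ½‖u - f‖² + t J(u)`. -/
theorem variational_minimizer_of_eigenfunction
    {H : Type*} [NormedAddCommGroup H] [InnerProductSpace ℝ H] [CompleteSpace H]
    (J : H → ℝ) (hconv : ConvexOn ℝ Set.univ J)
    (hhom : ∀ (c : ℝ) (w : H), J (c • w) = |c| * J w)
    (f : H) (lam : ℝ) (hlam : 0 < lam) (hef : IsSubgradientAt J f (lam • f))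
    (t : ℝ) (ht : 0 < t)
    (E : H → ℝ) (hE : ∀ w : H, E w = (1 / 2) * ‖w - f‖ ^ 2 + t * J w) :
    (∀ w : H, E (max (1 - t * lam) 0 • f) ≤ E w) ∧
      (∀ w : H, E w = E (max (1 - t * lam) 0 • f) → w = max (1 - t * lam) 0 • f) := by
  set c : ℝ := max (1 - t * lam) 0 with hc
  have hc0 : 0 ≤ c := le_max_right _ _
  have hJ0 : J (0 : H) = 0 := by
    have h := hhom 0 f
    simpa using h
  -- J f = lam * ⟨f, f⟩
  have hJff : J f = lam * (inner ℝ f f : ℝ) := by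
    have h1 := hef 0
    have h2 := hef ((2 : ℝ) • f)
    rw [hhom 2 f] at h2
    simp only [zero_sub, inner_neg_right, real_inner_smul_left, hJ0] at h1
    have h2' : (inner ℝ ((lam : ℝ) • f) ((2:ℝ) • f - f) : ℝ) = lam * (inner ℝ f f : ℝ) := by
      have : (2:ℝ) • f - f = f := by
        rw [two_smul]; abel
      rw [this, real_inner_smul_left]
    rw [h2'] at h2
    have habs : |(2:ℝ)| = 2 := by norm_num
    rw [habs] at h2
    linarith
  -- J v ≥ lam * ⟨f, v⟩
  have hJv : ∀ v : H, lam * (inner ℝ f v : ℝ) ≤ J v := by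
    intro v
    have h := hef v
    rw [inner_sub_right, real_inner_smul_left, real_inner_smul_left] at h
    linarith [h, hJff]
  have hJnonneg : ∀ v : H, 0 ≤ J v := by
    intro v
    have h1 := hJv v
    have h2 := hJv (-v)
    rw [show J (-v) = J v by
      have := hhom (-1) v; simpa using this] at h2
    rw [inner_neg_right] at h2
    nlinarith
  -- key subgradient inequality at c • f
  have hkey : ∀ v : H, t * J (c • f) + (inner ℝ (f - c • f) (v - c • f) : ℝ) ≤ t * J v := by
    intro v
    have hJcf : J (c • f) = c * J f := by rw [hhom, abs_of_nonneg hc0]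
    have hsm : f - c • f = (1 - c) • f := by
      rw [sub_smul, one_smul]
    have hinner : (inner ℝ (f - c • f) (v - c • f) : ℝ)
        = (1 - c) * ((inner ℝ f v : ℝ) - c * (inner ℝ f f : ℝ)) := by
      rw [hsm, real_inner_smul_left, inner_sub_right, real_inner_smul_right]
    rw [hJcf, hinner, hJff]
    rcases le_or_gt (t * lam) 1 with hcase | hcase
    · have hcval : c = 1 - t * lam := by
        rw [hc, max_eq_left (by linarith)]
      rw [hcval]
      have h := hJv v
      nlinarith [mul_le_mul_of_nonneg_left h ht.le]
    · have hcval : c = 0 := by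
        rw [hc, max_eq_right (by linarith)]
      rw [hcval]
      ring_nf
      have h1 := hJv v
      have h2 := hJnonneg v
      rcases le_or_gt ((inner ℝ f v : ℝ)) 0 with hfv | hfv
      · nlinarith
      · nlinarith [mul_le_mul_of_nonneg_left h1 ht.le]
  -- strong convexity estimate: E w ≥ E (c•f) + ½‖w - c•f‖²
  have hstrong : ∀ w : H, E (c • f) + (1/2) * ‖w - c • f‖ ^ 2 ≤ E w := by
    intro w
    have h := hkey w
    have hq := quad_identity (c • f) w f
    rw [hE w, hE (c • f)]
    linarith
  constructor
  · intro w
    have h := hstrong w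
    have : 0 ≤ (1/2) * ‖w - c • f‖ ^ 2 := by positivity
    linarith
  · intro w hw
    have h := hstrong w
    rw [hw] at h
    have hnorm : ‖w - c • f‖ ^ 2 ≤ 0 := by linarith
    have : ‖w - c • f‖ = 0 := by
      nlinarith [norm_nonneg (w - c • f)]
    have := norm_eq_zero.mp this
    rw [sub_eq_zero] at this
    exact this
end

section
/- Let f ∈ H and λ > 0 with λ • f ∈ ∂J(f). Define u : [0,∞) → H by u(s) = 0 for 0 ≤ s < λ and u(s) = f for s ≥ λ, and p : [0,∞) → H by p(s) = s • f for 0 ≤ s ≤ λ and p(s) = λ • f for s > λ. Then p(0) = 0; p(s) ∈ ∂J(u(s)) for all s ≥ 0; and for every s ≠ λ, p is differentiable at s with p'(s) = f - u(s). Hence (u, p) solves the inverse scale space flow ∂ₛp(s) = f - u(s), p(s) ∈ ∂J(u(s)), and u jumps instantaneously from 0 to f at time s = λ. -/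
/-- If `λ • f ∈ ∂J(f)` with `λ > 0`, then the pair `u(s) = 0` for `s < λ`, `u(s) = f`
for `s ≥ λ`, and `p(s) = s • f` for `s ≤ λ`, `p(s) = λ • f` for `s > λ`, solves the
inverse scale space flow `∂ₛ p(s) = f - u(s)`, `p(s) ∈ ∂J(u(s))`, `p(0) = 0`;
`u` jumps instantaneously from `0` to `f` at `s = λ`. -/
theorem inverseScaleSpace_of_eigenfunction
    {H : Type*} [NormedAddCommGroup H] [InnerProductSpace ℝ H] [CompleteSpace H]
    (J : H → ℝ) (hconv : ConvexOn ℝ Set.univ J)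
    (hhom : ∀ (c : ℝ) (w : H), J (c • w) = |c| * J w)
    (f : H) (lam : ℝ) (hlam : 0 < lam) (hef : IsSubgradientAt J f (lam • f))
    (u p : ℝ → H)
    (hu : ∀ s : ℝ, u s = if s < lam then 0 else f)
    (hp : ∀ s : ℝ, p s = if s ≤ lam then s • f else lam • f) :
    p 0 = 0 ∧
      (∀ s : ℝ, 0 ≤ s → IsSubgradientAt J (u s) (p s)) ∧
      (∀ s : ℝ, 0 ≤ s → s ≠ lam → HasDerivAt p (f - u s) s) := by
  have hJ0 : J 0 = 0 := by
    have := hhom 0 0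
    simpa using this
  -- J f = lam * ‖f‖²
  have hle : J f ≤ lam * (inner ℝ f f : ℝ) := by
    have := hef 0
    rw [hJ0] at this
    have h2 : (inner ℝ (lam • f) (0 - f) : ℝ) = -(lam * (inner ℝ f f : ℝ)) := by
      simp [real_inner_smul_left, inner_sub_right]
    rw [h2] at this
    linarith
  have hge : lam * (inner ℝ f f : ℝ) ≤ J f := by
    have := hef ((2 : ℝ) • f)
    rw [hhom 2 f] at this
    have h2 : (inner ℝ (lam • f) ((2:ℝ) • f - f) : ℝ) = lam * (inner ℝ f f : ℝ) := by
      have : (2:ℝ) • f - f = f := by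
        rw [two_smul]; abel
      rw [this, real_inner_smul_left]
    rw [h2] at this
    have habs : |(2:ℝ)| = 2 := by norm_num
    rw [habs] at this
    linarith
  have hJf : J f = lam * (inner ℝ f f : ℝ) := le_antisymm hle hge
  -- key bound: J v ≥ lam * ⟨f, v⟩ and J v ≥ -lam * ⟨f, v⟩
  have hkey : ∀ v : H, lam * (inner ℝ f v : ℝ) ≤ J v := by
    intro v
    have := hef v
    have h2 : (inner ℝ (lam • f) (v - f) : ℝ) = lam * (inner ℝ f v : ℝ) - lam * (inner ℝ f f : ℝ) := by
      rw [real_inner_smul_left, inner_sub_right]; ring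
    rw [h2, hJf] at this
    linarith
  have hkey' : ∀ v : H, -(lam * (inner ℝ f v : ℝ)) ≤ J v := by
    intro v
    have := hkey (-v)
    have hJn : J (-v) = J v := by
      have := hhom (-1) v
      simpa using this
    rw [hJn] at this
    simpa [inner_neg_right] using this
  refine ⟨?_, ?_, ?_⟩
  · rw [hp 0]
    simp [hlam.le]
  · intro s hs v
    by_cases h : s < lam
    · rw [hu s, hp s, if_pos h, if_pos h.le]
      rw [hJ0, sub_zero, real_inner_smul_left]
      have hJv : s * (inner ℝ f v : ℝ) ≤ J v := by
        rcases le_or_gt 0 (inner ℝ f v : ℝ) with hiv | hiv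
        · calc s * (inner ℝ f v : ℝ) ≤ lam * (inner ℝ f v : ℝ) := by nlinarith
            _ ≤ J v := hkey v
        · calc s * (inner ℝ f v : ℝ) ≤ -(lam * (inner ℝ f v : ℝ)) := by nlinarith
            _ ≤ J v := hkey' v
      linarith
    · push_neg at h
      rw [hu s, hp s, if_neg (not_lt.mpr h)]
      by_cases h2 : s ≤ lam
      · have hs : s = lam := le_antisymm h2 h
        rw [if_pos h2, hs]
        exact hef v
      · rw [if_neg h2]
        exact hef v
  · intro s _ hne
    rcases lt_or_gt_of_ne hne with h | h
    · -- locally p t = t • f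
      have heq : p =ᶠ[nhds s] fun t => t • f := by
        filter_upwards [IsOpen.mem_nhds isOpen_Iio h] with t ht
        rw [hp t, if_pos (le_of_lt ht)]
      have hd : HasDerivAt (fun t : ℝ => t • f) f s := by
        simpa using (hasDerivAt_id s).smul_const f
      have : HasDerivAt p f s := hd.congr_of_eventuallyEq heq
      rw [hu s, if_pos h]
      simpa using this
    · have heq : p =ᶠ[nhds s] fun _ => lam • f := by
        filter_upwards [IsOpen.mem_nhds isOpen_Ioi h] with t ht
        rw [hp t, if_neg (not_le.mpr ht)]
      have hd : HasDerivAt (fun _ : ℝ => lam • f) 0 s := hasDerivAt_const s _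
      have : HasDerivAt p 0 s := hd.congr_of_eventuallyEq heq
      rw [hu s, if_neg (not_lt.mpr h.le)]
      simpa [sub_self] using this
end

section
/- Let u : [0,∞) → H be differentiable with u(0) = f, suppose that for every t ≥ 0 there exists p(t) ∈ ∂J(u(t)) with u'(t) = -p(t), and suppose ‖u(t)‖ → 0 as t → ∞. Then the nonnegative function t ↦ J(u(t)) satisfies the Parseval-type identity ∫₀^∞ J(u(t)) dt = (1/2)‖f‖². -/
open MeasureTheory Filter

/-- Parseval-type identity for the gradient flow of a convex absolutely
one-homogeneous functional: if `∂ₜ u(t) = -p(t)` with `p(t) ∈ ∂J(u(t))`,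
`u(0) = f` and `‖u(t)‖ → 0` as `t → ∞`, then `∫₀^∞ J(u(t)) dt = ½‖f‖²`. -/
theorem parseval_gradientFlow
    {H : Type*} [NormedAddCommGroup H] [InnerProductSpace ℝ H] [CompleteSpace H]
    (J : H → ℝ) (hconv : ConvexOn ℝ Set.univ J)
    (hhom : ∀ (c : ℝ) (w : H), J (c • w) = |c| * J w)
    (f : H) (u p : ℝ → H) (hu0 : u 0 = f)
    (hflow : ∀ t : ℝ, 0 ≤ t →
      HasDerivAt u (-(p t)) t ∧ IsSubgradientAt J (u t) (p t))
    (hlim : Tendsto (fun t : ℝ => ‖u t‖) atTop (nhds 0)) :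
    ∫ t in Set.Ioi (0 : ℝ), J (u t) = (1 / 2) * ‖f‖ ^ 2 := by
  have hJ0 : J 0 = 0 := by
    have := hhom 0 0
    simpa using this
  -- J is nonnegative
  have hJnonneg : ∀ w : H, 0 ≤ J w := by
    intro w
    have hneg : J (-w) = J w := by
      have := hhom (-1) w
      simpa using this
    have h := hconv.2 (Set.mem_univ w) (Set.mem_univ (-w))
      (by norm_num : (0:ℝ) ≤ (1/2:ℝ)) (by norm_num : (0:ℝ) ≤ (1/2:ℝ)) (by norm_num)
    simp only [smul_neg] at h
    have : (1/2:ℝ) • w + -((1/2:ℝ) • w) = 0 := by abel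
    rw [this, hJ0, hneg] at h
    simp only [smul_eq_mul] at h
    linarith
  -- key: ⟪p t, u t⟫ = J (u t)
  have hkey : ∀ t : ℝ, 0 ≤ t → (inner ℝ (p t) (u t) : ℝ) = J (u t) := by
    intro t ht
    have hs := (hflow t ht).2
    have h1 := hs ((2:ℝ) • (u t))
    have h2 := hs 0
    have e1 : ((2:ℝ)) • u t - u t = u t := by
      rw [two_smul]; abel
    have e2 : (0:H) - u t = -(u t) := by abel
    rw [hhom 2 (u t)] at h1
    rw [e1] at h1
    rw [e2, hJ0, inner_neg_right] at h2
    norm_num at h1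
    linarith
  -- the function g t = -(1/2) * ⟪u t, u t⟫
  set g : ℝ → ℝ := fun t => -(1/2) * (inner ℝ (u t) (u t) : ℝ) with hg
  have hgderiv : ∀ t ∈ Set.Ioi (0:ℝ), HasDerivAt g (J (u t)) t := by
    intro t ht
    have ht' : (0:ℝ) ≤ t := le_of_lt ht
    have hd := (hflow t ht').1
    have hinner := hd.inner ℝ hd
    have : HasDerivAt g (-(1/2) * ((inner ℝ (u t) (-(p t)) : ℝ) + (inner ℝ (-(p t)) (u t) : ℝ))) t :=
      hinner.const_mul (-(1/2))
    convert this using 1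
    rw [inner_neg_right, inner_neg_left, real_inner_comm]
    rw [hkey t ht']
    ring
  have hgcont : ContinuousWithinAt g (Set.Ici (0:ℝ)) 0 := by
    have hd := (hflow 0 le_rfl).1
    exact (((hd.inner ℝ hd).const_mul (-(1/2))).continuousAt).continuousWithinAt
  have hgtend : Tendsto g atTop (nhds 0) := by
    have h2 : Tendsto (fun t => ‖u t‖ * ‖u t‖) atTop (nhds 0) := by
      simpa using hlim.mul hlim
    have heq : g = fun t => -(1/2) * (‖u t‖ * ‖u t‖) := by
      funext t
      rw [hg]
      simp [real_inner_self_eq_norm_mul_norm, sq]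
    rw [heq, show (0:ℝ) = -(1/2) * 0 by ring]
    exact h2.const_mul _
  have hnonneg : ∀ t ∈ Set.Ioi (0:ℝ), 0 ≤ J (u t) := fun t _ => hJnonneg (u t)
  have := integral_Ioi_of_hasDerivAt_of_nonneg hgcont hgderiv hnonneg hgtend
  rw [this, hg]
  simp [hu0, real_inner_self_eq_norm_mul_norm]
end

section
/- Let u, p : (a,b) → H be such that p(s) ∈ ∂J(u(s)) for every s ∈ (a,b). If p is differentiable at a point t ∈ (a,b), then ⟨p'(t), u(t)⟩ = 0. (In particular, along the gradient flow the spectral component φ(t) = t ∂ₜₜ u(t) = -t p'(t) is orthogonal to u(t).) -/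
lemma subgrad_inner_eq {H : Type*} [NormedAddCommGroup H] [InnerProductSpace ℝ H]
    (J : H → ℝ) (hhom : ∀ (c : ℝ) (w : H), J (c • w) = |c| * J w)
    {u p : H} (h : IsSubgradientAt J u p) : (inner ℝ p u : ℝ) = J u := by
  have h0 : J 0 = 0 := by
    have := hhom 0 0; simpa using this
  have h1 := h 0
  have h2 := h ((2:ℝ) • u)
  rw [h0] at h1
  have h2' : J ((2:ℝ) • u) = 2 * J u := by
    have := hhom 2 u; simpa [abs_of_nonneg] using this
  rw [h2'] at h2
  have e1 : (inner ℝ p (0 - u) : ℝ) = -(inner ℝ p u : ℝ) := by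
    simp [inner_sub_right]
  have e2 : (inner ℝ p ((2:ℝ) • u - u) : ℝ) = (inner ℝ p u : ℝ) := by
    have : (2:ℝ) • u - u = u := by
      rw [two_smul]; abel
    rw [this]
  rw [e1] at h1
  rw [e2] at h2
  linarith

/-- Orthogonality: if `p(s) ∈ ∂J(u(s))` on `(a,b)` for a convex absolutely
one-homogeneous `J` and `p` is differentiable at `t ∈ (a,b)` with derivative `p'`,
then `⟨p'(t), u(t)⟩ = 0`. In particular, along the gradient flow the spectral
component `φ(t) = t ∂ₜₜ u(t) = -t p'(t)` is orthogonal to `u(t)`. -/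
theorem deriv_subgradient_orthogonal
    {H : Type*} [NormedAddCommGroup H] [InnerProductSpace ℝ H] [CompleteSpace H]
    (J : H → ℝ) (hconv : ConvexOn ℝ Set.univ J)
    (hhom : ∀ (c : ℝ) (w : H), J (c • w) = |c| * J w)
    (a b : ℝ) (u p : ℝ → H)
    (hsub : ∀ s ∈ Set.Ioo a b, IsSubgradientAt J (u s) (p s))
    (t : ℝ) (ht : t ∈ Set.Ioo a b)
    (p' : H) (hp' : HasDerivAt p p' t) :
    (inner ℝ p' (u t) : ℝ) = 0 := by
  set f : ℝ → ℝ := fun s => (inner ℝ (p s) (u t) : ℝ) with hf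
  have hft : f t = J (u t) := subgrad_inner_eq J hhom (hsub t ht)
  -- f s ≤ J (u t) for s ∈ Ioo a b
  have hub : ∀ s ∈ Set.Ioo a b, f s ≤ J (u t) := by
    intro s hs
    have h := hsub s hs (u t)
    have heq : (inner ℝ (p s) (u s) : ℝ) = J (u s) := subgrad_inner_eq J hhom (hsub s hs)
    have : J (u t) ≥ J (u s) + ((inner ℝ (p s) (u t) : ℝ) - (inner ℝ (p s) (u s) : ℝ)) := by
      simpa [inner_sub_right] using h
    simp only [hf]
    linarith [this, heq.ge, heq.le]
  have hmax : IsLocalMax f t := by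
    have hnhds : Set.Ioo a b ∈ nhds t := Ioo_mem_nhds ht.1 ht.2
    filter_upwards [hnhds] with s hs
    calc f s ≤ J (u t) := hub s hs
      _ = f t := hft.symm
  have hfd : HasDerivAt f (inner ℝ p' (u t) : ℝ) t := by
    have := (hp'.inner ℝ (hasDerivAt_const t (u t)))
    simpa using this
  exact hmax.hasDerivAt_eq_zero hfd
end

section
/- For every cutoff t_c > 0 with t_c ≠ |ζᵢ| for all i, the ideal low-pass filtered signal u(t_c) - t_c • u'(t_c) equals Vᵀ h(t_c), where hᵢ(t_c) = ζᵢ if |ζᵢ| > t_c and hᵢ(t_c) = 0 otherwise. That is, applying the ideal low pass filter with cutoff wavelength t_c in the nonlinear spectral representation of J(u) = ‖Vu‖₁ is exactly hard thresholding of the coefficients ζ = Vf at level t_c. -/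
open Matrix

/-- For `J(u) = ‖Vu‖₁` with `V` orthogonal and `ζ = Vf`, applying the ideal low pass
filter with cutoff wavelength `t_c` to the nonlinear spectral representation, i.e.
`LPF_{t_c}(f) = ∫_{t_c}^∞ t u''(t) dt = u(t_c) - t_c u'(t_c)`, is exactly hard
thresholding of the coefficients `ζ` at level `t_c`: it equals `Vᵀ h(t_c)` with
`hᵢ(t_c) = ζᵢ` if `|ζᵢ| > t_c` and `hᵢ(t_c) = 0` otherwise. -/
theorem idealLowPass_eq_hardThresholding
    {n : ℕ} (V : Matrix (Fin n) (Fin n) ℝ) (hV : Vᵀ * V = 1)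
    (f ζ : Fin n → ℝ) (hζ : ζ = V.mulVec f)
    (u : ℝ → Fin n → ℝ)
    (hu : ∀ t : ℝ, u t = Vᵀ.mulVec (fun i => Real.sign (ζ i) * max (|ζ i| - t) 0))
    (tc : ℝ) (htc : 0 < tc) (hne : ∀ i, tc ≠ |ζ i|) :
    u tc - tc • deriv u tc =
      Vᵀ.mulVec (fun i => if tc < |ζ i| then ζ i else 0) := by
  set d : Fin n → ℝ := fun i => if tc < |ζ i| then -Real.sign (ζ i) else 0 with hd
  have hs : ∀ i, HasDerivAt (fun t => Real.sign (ζ i) * max (|ζ i| - t) 0) (d i) tc := by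
    intro i
    rcases lt_or_gt_of_ne (hne i) with h | h
    · -- tc < |ζ i|
      have hev : ∀ᶠ t in nhds tc, Real.sign (ζ i) * max (|ζ i| - t) 0
          = Real.sign (ζ i) * (|ζ i| - t) := by
        filter_upwards [eventually_lt_nhds h] with t ht
        rw [max_eq_left (by linarith)]
      have h1 : HasDerivAt (fun t => Real.sign (ζ i) * (|ζ i| - t))
          (-Real.sign (ζ i)) tc := by
        simpa using (((hasDerivAt_const tc (|ζ i|)).sub (hasDerivAt_id tc)).const_mul
          (Real.sign (ζ i)))
      have := h1.congr_of_eventuallyEq hev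
      simpa [hd, if_pos h] using this
    · -- |ζ i| < tc
      have hev : ∀ᶠ t in nhds tc, Real.sign (ζ i) * max (|ζ i| - t) 0
          = (0 : ℝ) := by
        filter_upwards [eventually_gt_nhds h] with t ht
        rw [max_eq_right (by linarith)]; ring
      have := (hasDerivAt_const tc (0 : ℝ)).congr_of_eventuallyEq hev
      simpa [hd, if_neg (not_lt.2 h.le)] using this
  have hder : HasDerivAt u (Vᵀ.mulVec d) tc := by
    rw [hasDerivAt_pi]
    intro j
    have : ∀ t, u t j = ∑ i, Vᵀ j i * (Real.sign (ζ i) * max (|ζ i| - t) 0) := by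
      intro t; rw [hu t]; simp [mulVec, dotProduct]
    have hsum : HasDerivAt (fun t => ∑ i, Vᵀ j i * (Real.sign (ζ i) * max (|ζ i| - t) 0))
        (∑ i, Vᵀ j i * d i) tc := by
      exact HasDerivAt.fun_sum fun i _ => (hs i).const_mul _
    have : (fun t => u t j) = fun t => ∑ i, Vᵀ j i * (Real.sign (ζ i) * max (|ζ i| - t) 0) := by
      funext t; exact this t
    rw [this]
    simpa [mulVec, dotProduct] using hsum
  rw [hder.deriv, hu tc]
  funext j
  simp only [Pi.sub_apply, Pi.smul_apply, smul_eq_mul, mulVec, dotProduct,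
    Finset.mul_sum, ← Finset.sum_sub_distrib]
  refine Finset.sum_congr rfl fun i _ => ?_
  rcases lt_or_gt_of_ne (hne i) with h | h
  · have hmax : max (|ζ i| - tc) 0 = |ζ i| - tc := max_eq_left (by linarith)
    rw [hmax, hd]
    simp only [if_pos h]
    have hsa : Real.sign (ζ i) * |ζ i| = ζ i := by
      rcases lt_trichotomy (ζ i) 0 with hz | hz | hz
      · rw [Real.sign_of_neg hz, abs_of_neg hz]; ring
      · simp [hz]
      · rw [Real.sign_of_pos hz, abs_of_pos hz]; ring
    linear_combination Vᵀ j i * hsa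
  · have hmax : max (|ζ i| - tc) 0 = 0 := max_eq_right (by linarith)
    rw [hmax, hd]
    simp [if_neg (not_lt.2 h.le)]
end
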